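/- Let Z be a Banach space, p ∈ (1,∞), and let f : [0,∞) → Z be a function belonging to L²(0,∞;Z) (i.e. strongly measurable with ∫_0^∞ ‖f(s)‖_Z² ds < ∞) which is locally absolutely continuous, with an a.e. derivative f' satisfying sup_{t ∈ [0,∞)} (∫_t^{t+1} ‖f'(s)‖_Z^p ds)^{1/p} < ∞. Then f(t) → 0 strongly in Z as t → ∞, i.e. ‖f(t)‖_Z → 0. -/

import Mathlib

open MeasureTheory Set Filter

/-- If `f ∈ L²(0, ∞; Z)` is locally absolutely continuous with a.e. derivative
`f'` whose `L^p(t, t+1; Z)` norms are uniformly bounded in `t ≥ 0` for some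
`p ∈ (1, ∞)`, then `f(t) → 0` strongly in `Z` as `t → ∞`. -/
theorem tendsto_zero_of_L2_and_uniform_Lp_derivative
    {Z : Type*} [NormedAddCommGroup Z] [NormedSpace ℝ Z] [CompleteSpace Z]
    (f f' : ℝ → Z) (p : ℝ) (hp : 1 < p)
    (hf_meas : MeasureTheory.AEStronglyMeasurable f
      (MeasureTheory.volume.restrict (Set.Ioi (0:ℝ))))
    (hfL2 : MeasureTheory.IntegrableOn (fun s => ‖f s‖ ^ 2) (Set.Ioi (0:ℝ)))
    (hf'_loc : ∀ t ≥ (0:ℝ), MeasureTheory.IntegrableOn f' (Set.Icc 0 t))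
    (hFTC : ∀ s t : ℝ, 0 ≤ s → s ≤ t → f t - f s = ∫ r in s..t, f' r)
    (hf'p_int : ∀ t ≥ (0:ℝ),
      MeasureTheory.IntegrableOn (fun s => ‖f' s‖ ^ p) (Set.Icc t (t+1)))
    (M : ℝ)
    (hM : ∀ t ≥ (0:ℝ), (∫ s in t..(t+1), ‖f' s‖ ^ p) ^ (1/p) ≤ M) :
    Filter.Tendsto (fun t => ‖f t‖) Filter.atTop (nhds 0) := by
  have hp0 : 0 < p := lt_trans one_pos hp
  have hpq : p.HolderConjugate (p / (p - 1)) := Real.HolderConjugate.conjExponent hp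
  set q : ℝ := p / (p - 1) with hq_def
  have hq0 : 0 < q := hpq.symm.pos
  have hc : (1 : ℝ) / q = 1 - 1 / p := by
    have := hpq.inv_add_inv_eq_one
    simp only [one_div]
    linarith [this]
  have hc0 : 0 < 1 - 1 / p := by
    rw [← hc]; positivity
  -- M is nonnegative
  have hM0 : 0 ≤ M := by
    refine le_trans ?_ (hM 0 le_rfl)
    apply Real.rpow_nonneg
    apply intervalIntegral.integral_nonneg (by norm_num)
    intro x _
    exact Real.rpow_nonneg (norm_nonneg _) _
  -- key Hölder estimate
  have hkey : ∀ s t : ℝ, 0 ≤ s → s ≤ t → t ≤ s + 1 →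
      ‖f t - f s‖ ≤ M * (t - s) ^ (1 - 1/p) := by
    intro s t hs hst hts1
    rw [hFTC s t hs hst]
    have hsub : Ioc s t ⊆ Icc s (s + 1) := fun x hx => ⟨le_of_lt hx.1, hx.2.trans hts1⟩
    have hsub' : Icc s (s+1) ⊆ Icc 0 (s + 1) := Icc_subset_Icc_left hs
    have hf'int : IntegrableOn f' (Ioc s t) :=
      (hf'_loc (s+1) (by linarith)).mono_set (hsub.trans hsub')
    have hf'pint : IntegrableOn (fun r => ‖f' r‖ ^ p) (Ioc s t) :=
      (hf'p_int s hs).mono_set hsub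
    have h1 : ‖∫ r in s..t, f' r‖ ≤ ∫ r in s..t, ‖f' r‖ :=
      intervalIntegral.norm_integral_le_integral_norm hst
    refine h1.trans ?_
    rw [intervalIntegral.integral_of_le hst]
    -- Hölder with the constant function 1
    have hmem : MemLp (fun r => ‖f' r‖) (ENNReal.ofReal p)
        (volume.restrict (Ioc s t)) := by
      have hameas : AEStronglyMeasurable f' (volume.restrict (Ioc s t)) :=
        hf'int.aestronglyMeasurable
      have := (memLp_norm_rpow_iff (q := ENNReal.ofReal p) (p := ENNReal.ofReal p)
        hameas (by simp [hp0]) (by simp)).1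
      have htoReal : (ENNReal.ofReal p).toReal = p := ENNReal.toReal_ofReal hp0.le
      have hint1 : MemLp (fun r => ‖f' r‖ ^ (ENNReal.ofReal p).toReal)
          (ENNReal.ofReal p / ENNReal.ofReal p) (volume.restrict (Ioc s t)) := by
        rw [ENNReal.div_self (by simp [hp0]) (by simp), htoReal]
        exact memLp_one_iff_integrable.2 hf'pint
      exact ((this hint1).norm :)
    have hmem1 : MemLp (fun _ : ℝ => (1 : ℝ)) (ENNReal.ofReal q)
        (volume.restrict (Ioc s t)) := by
      have : IsFiniteMeasure (volume.restrict (Ioc s t)) := by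
        constructor
        rw [Measure.restrict_apply_univ]
        exact measure_Ioc_lt_top
      exact memLp_const 1
    have holder := integral_mul_le_Lp_mul_Lq_of_nonneg (μ := volume.restrict (Ioc s t))
      hpq (Filter.Eventually.of_forall fun x => norm_nonneg (f' x))
      (Filter.Eventually.of_forall fun _ => zero_le_one) hmem hmem1
    simp only [mul_one, Real.one_rpow] at holder
    rw [integral_const] at holder
    have hvol : ((volume.restrict (Ioc s t)) univ).toReal = t - s := by
      rw [Measure.restrict_apply_univ, Real.volume_Ioc,
        ENNReal.toReal_ofReal (by linarith)]
    rw [measureReal_def, hvol, smul_eq_mul, mul_one] at holder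
    refine holder.trans ?_
    rw [← hc]
    have hfac1 : (∫ a in Ioc s t, ‖f' a‖ ^ p) ^ (1/p) ≤ M := by
      have hmono : ∫ a in Ioc s t, ‖f' a‖ ^ p ≤ ∫ a in Icc s (s+1), ‖f' a‖ ^ p := by
        refine setIntegral_mono_set (hf'p_int s hs) ?_
          (HasSubset.Subset.eventuallyLE hsub)
        exact Filter.Eventually.of_forall fun x => Real.rpow_nonneg (norm_nonneg _) _
      have heq : ∫ a in Icc s (s+1), ‖f' a‖ ^ p = ∫ r in s..(s+1), ‖f' r‖ ^ p := by
        rw [intervalIntegral.integral_of_le (by linarith), integral_Icc_eq_integral_Ioc]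
      refine le_trans ?_ (hM s hs)
      apply Real.rpow_le_rpow ?_ (heq ▸ hmono) (by positivity)
      exact setIntegral_nonneg measurableSet_Ioc
        fun x _ => Real.rpow_nonneg (norm_nonneg _) _
    have hint_nonneg : 0 ≤ ∫ a in Ioc s t, ‖f' a‖ ^ p :=
      setIntegral_nonneg measurableSet_Ioc fun x _ => Real.rpow_nonneg (norm_nonneg _) _
    have hts0 : 0 ≤ (t - s) ^ (1/q) := Real.rpow_nonneg (by linarith) _
    exact mul_le_mul_of_nonneg_right hfac1 hts0
  -- contradiction argument
  by_contra hcon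
  rw [Metric.tendsto_atTop] at hcon
  push_neg at hcon
  obtain ⟨ε, hε, hfreq⟩ := hcon
  -- choose δ
  set A : ℝ := ε / (2 * (M + 1)) with hA_def
  have hA0 : 0 < A := by positivity
  set δ : ℝ := min 1 (A ^ (1 / (1 - 1/p))) with hδ_def
  have hδ0 : 0 < δ := lt_min one_pos (Real.rpow_pos_of_pos hA0 _)
  have hδ1 : δ ≤ 1 := min_le_left _ _
  have hδc : M * δ ^ (1 - 1/p) ≤ ε / 2 := by
    have h1 : δ ^ (1 - 1/p) ≤ A := by
      calc δ ^ (1 - 1/p) ≤ (A ^ (1 / (1 - 1/p))) ^ (1 - 1/p) :=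
            Real.rpow_le_rpow hδ0.le (min_le_right _ _) hc0.le
        _ = A := by
            rw [one_div, Real.rpow_inv_rpow hA0.le hc0.ne']
    calc M * δ ^ (1 - 1/p) ≤ (M + 1) * A := by
          apply mul_le_mul (by linarith) h1 (Real.rpow_nonneg hδ0.le _) (by linarith)
      _ = ε / 2 := by
          rw [hA_def]; field_simp
  -- tail of the L² integral
  have hL2tend : Tendsto (fun T : ℝ => ∫ x in (0:ℝ)..T, ‖f x‖ ^ 2)
      atTop (nhds (∫ x in Ioi (0:ℝ), ‖f x‖ ^ 2)) :=
    intervalIntegral_tendsto_integral_Ioi 0 hfL2 tendsto_id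
  have hL2tend' : Tendsto (fun T : ℝ => ∫ x in (0:ℝ)..(T + δ), ‖f x‖ ^ 2)
      atTop (nhds (∫ x in Ioi (0:ℝ), ‖f x‖ ^ 2)) :=
    intervalIntegral_tendsto_integral_Ioi 0 hfL2 (tendsto_atTop_add_const_right _ δ tendsto_id)
  have hii : ∀ a b : ℝ, 0 ≤ a → a ≤ b → IntervalIntegrable (fun s => ‖f s‖ ^ 2) volume a b := by
    intro a b ha hab
    rw [intervalIntegrable_iff_integrableOn_Ioc_of_le hab]
    exact hfL2.mono_set fun x hx => lt_of_le_of_lt ha hx.1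
  have hdiff : ∀ᶠ T in atTop, (∫ x in (0:ℝ)..(T + δ), ‖f x‖ ^ 2)
      - (∫ x in (0:ℝ)..T, ‖f x‖ ^ 2) = ∫ x in T..(T + δ), ‖f x‖ ^ 2 := by
    filter_upwards [eventually_ge_atTop (0:ℝ)] with T hT
    exact intervalIntegral.integral_interval_sub_left
      (hii 0 (T + δ) le_rfl (by linarith)) (hii 0 T le_rfl hT)
  have htail : Tendsto (fun T : ℝ => ∫ x in T..(T + δ), ‖f x‖ ^ 2) atTop (nhds 0) := by
    have := hL2tend'.sub hL2tend
    rw [sub_self] at this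
    exact this.congr' hdiff
  have hsmall : ∀ᶠ T in atTop, (∫ x in T..(T + δ), ‖f x‖ ^ 2) < δ * (ε/2)^2 :=
    htail.eventually_lt_const (by positivity)
  obtain ⟨T₀, hT₀⟩ := eventually_atTop.1 hsmall
  obtain ⟨t, ht, hft⟩ := hfreq (max T₀ 1)
  have ht1 : (1:ℝ) ≤ t := le_trans (le_max_right _ _) ht
  have ht0 : (0:ℝ) ≤ t := by linarith
  have hεft : ε ≤ ‖f t‖ := by
    have := hft
    rw [Real.dist_eq, sub_zero, abs_of_nonneg (norm_nonneg _)] at this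
    exact this
  -- lower bound for ‖f x‖ on [t, t+δ]
  have hlow : ∀ x ∈ Icc t (t + δ), ε / 2 ≤ ‖f x‖ := by
    intro x hx
    have hdx : ‖f x - f t‖ ≤ M * (x - t) ^ (1 - 1/p) :=
      hkey t x ht0 hx.1 (by linarith [hx.2])
    have hstep : M * (x - t) ^ (1 - 1/p) ≤ M * δ ^ (1 - 1/p) := by
      apply mul_le_mul_of_nonneg_left ?_ hM0
      exact Real.rpow_le_rpow (by linarith [hx.1]) (by linarith [hx.2]) hc0.le
    have h2 : ‖f t‖ - ‖f x‖ ≤ ‖f x - f t‖ := by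
      rw [norm_sub_rev]
      exact norm_sub_norm_le _ _
    linarith
  -- lower bound for the integral
  have hlowint : δ * (ε/2)^2 ≤ ∫ x in t..(t + δ), ‖f x‖ ^ 2 := by
    have h1 : ∫ x in t..(t + δ), (ε/2)^2 ≤ ∫ x in t..(t + δ), ‖f x‖ ^ 2 := by
      apply intervalIntegral.integral_mono_on (by linarith) intervalIntegrable_const
        (hii t (t + δ) ht0 (by linarith))
      intro x hx
      have := hlow x hx
      have hε2 : (0:ℝ) ≤ ε / 2 := by linarith
      exact pow_le_pow_left₀ hε2 this 2
    rwa [intervalIntegral.integral_const, smul_eq_mul, add_sub_cancel_left] at h1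
  have hTsmall : (∫ x in t..(t + δ), ‖f x‖ ^ 2) < δ * (ε/2)^2 :=
    hT₀ t (le_trans (le_max_left _ _) ht)
  linarith
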